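/- arXiv:1104.2271 — 5 statements merged into one kernel-verified Lean document; each statement's English description precedes it below -/
import Mathlib

section
/- Let A and B be positive semidefinite n×n complex matrices. Then the matrix product AB is diagonalizable with nonnegative real eigenvalues: there exist an invertible n×n complex matrix P and a diagonal n×n matrix D whose diagonal entries are nonnegative real numbers such that AB = P D P⁻¹. In particular every eigenvalue of AB is a nonnegative real number, and √(AB) is uniquely defined. -/
open Matrix ComplexOrder Polynomial

private lemma aux_aeval_swap {n : ℕ} (X Y : Matrix (Fin n) (Fin n) ℂ) (f : ℂ[X]) :
    (aeval (X * Y) f) * X = X * (aeval (Y * X) f) := by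
  induction f using Polynomial.induction_on with
  | C a => simp [Algebra.commutes]
  | add f g hf hg => simp [map_add, add_mul, mul_add, hf, hg]
  | monomial k a ih =>
      have h : (C a * Polynomial.X ^ (k + 1) : ℂ[X]) = (C a * Polynomial.X ^ k) * Polynomial.X := by
        ring
      rw [h, _root_.map_mul (aeval (X * Y)) (C a * Polynomial.X ^ k) Polynomial.X,
        _root_.map_mul (aeval (Y * X)) (C a * Polynomial.X ^ k) Polynomial.X, aeval_X, aeval_X]
      simp only [Matrix.mul_assoc]
      rw [← Matrix.mul_assoc _ X (Y * X), ih, Matrix.mul_assoc]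

private lemma aux_aeval_mulVec {n : ℕ} {W : Matrix (Fin n) (Fin n) ℂ} (hW : W.IsHermitian)
    (f : ℂ[X]) (j : Fin n) :
    (aeval W f) *ᵥ ⇑(hW.eigenvectorBasis j) =
      (f.eval ((hW.eigenvalues j : ℝ) : ℂ)) • ⇑(hW.eigenvectorBasis j) := by
  induction f using Polynomial.induction_on with
  | C a => simp [Matrix.smul_mulVec, Matrix.one_mulVec, Algebra.algebraMap_eq_smul_one]
  | add f g hf hg => simp [map_add, Matrix.add_mulVec, hf, hg, add_smul]
  | monomial k a ih =>
      have h : (C a * Polynomial.X ^ (k + 1) : ℂ[X]) = (C a * Polynomial.X ^ k) * Polynomial.X := by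
        ring
      rw [h, _root_.map_mul (aeval W) (C a * Polynomial.X ^ k) Polynomial.X, aeval_X,
        ← Matrix.mulVec_mulVec, hW.mulVec_eigenvectorBasis, Matrix.mulVec_smul, ih,
        ← smul_assoc]
      congr 1
      simp only [smul_eq_mul, eval_mul, eval_pow, eval_X, eval_C, Complex.real_smul]
      ring

private lemma aux_aeval_eq_zero {n : ℕ} {W : Matrix (Fin n) (Fin n) ℂ} (hW : W.IsHermitian)
    (p : ℂ[X]) (hroot : ∀ j, p.eval ((hW.eigenvalues j : ℝ) : ℂ) = 0) :
    aeval W p = 0 := by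
  have hb : ∀ j, (aeval W p) *ᵥ ⇑(hW.eigenvectorBasis j) = 0 := fun j => by
    rw [aux_aeval_mulVec hW, hroot, zero_smul]
  let e : EuclideanSpace ℂ (Fin n) ≃ₗ[ℂ] (Fin n → ℂ) := WithLp.linearEquiv 2 ℂ _
  let b : Module.Basis (Fin n) ℂ (Fin n → ℂ) := (hW.eigenvectorBasis.toBasis).map e
  have hL : (aeval W p).mulVecLin = 0 := by
    apply b.ext
    intro j
    have hbj : b j = ⇑(hW.eigenvectorBasis j) := by
      simp [b, e]
    simp only [Matrix.mulVecLin_apply, LinearMap.zero_apply, hbj]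
    exact hb j
  have hall : ∀ x, (aeval W p) *ᵥ x = 0 := fun x => by
    have h := LinearMap.congr_fun hL x
    simpa using h
  ext i j
  have h := congrFun (hall (Pi.single j 1)) i
  simpa using h


private lemma aux_mem_iSup_eigenspace {V : Type*} [AddCommGroup V] [Module ℂ V]
    (f : Module.End ℂ V) (s : Finset ℂ) :
    ∀ x : V, (aeval f (∏ c ∈ s, (Polynomial.X - C c))) x = 0 →
      x ∈ ⨆ c ∈ s, f.eigenspace c := by
  classical
  induction s using Finset.induction_on with
  | empty =>
      intro x hx
      simp only [Finset.prod_empty, _root_.map_one, Module.End.one_apply] at hx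
      simp [hx]
  | insert c s hc ih =>
      intro x hx
      have hcop : IsCoprime (Polynomial.X - C c) (∏ c' ∈ s, (Polynomial.X - C c')) := by
        apply IsCoprime.prod_right
        intro c' hc'
        refine Polynomial.isCoprime_X_sub_C_of_isUnit_sub ?_
        have hne : c ≠ c' := fun h => hc (h ▸ hc')
        exact (sub_ne_zero.mpr hne).isUnit
      obtain ⟨u, v, huv⟩ := hcop
      have hx' : (aeval f ((Polynomial.X - C c) * ∏ c' ∈ s, (Polynomial.X - C c'))) x = 0 := by
        rw [Finset.prod_insert hc] at hx; exact hx
      set t1 := (aeval f (u * (Polynomial.X - C c))) x with ht1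
      set t2 := (aeval f (v * ∏ c' ∈ s, (Polynomial.X - C c'))) x with ht2
      have hsplit : x = t1 + t2 := by
        have h := congrArg (fun g => (aeval f g) x) huv
        simp only [map_add, LinearMap.add_apply, _root_.map_one, Module.End.one_apply] at h
        exact h.symm
      have ht2mem : t2 ∈ f.eigenspace c := by
        rw [Module.End.mem_eigenspace_iff]
        have h0 : (aeval f (Polynomial.X - C c)) t2 = 0 := by
          rw [ht2, ← Module.End.mul_apply, ← _root_.map_mul]
          have he : (Polynomial.X - C c) * (v * ∏ c' ∈ s, (Polynomial.X - C c')) =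
              v * ((Polynomial.X - C c) * ∏ c' ∈ s, (Polynomial.X - C c')) := by ring
          rw [he, _root_.map_mul, Module.End.mul_apply, hx', map_zero]
        simp only [map_sub, aeval_X, aeval_C, LinearMap.sub_apply,
          Module.algebraMap_end_apply] at h0
        rw [sub_eq_zero] at h0
        exact h0
      have ht1mem : t1 ∈ ⨆ c' ∈ s, f.eigenspace c' := by
        apply ih
        rw [ht1, ← Module.End.mul_apply, ← _root_.map_mul]
        have he : (∏ c' ∈ s, (Polynomial.X - C c')) * (u * (Polynomial.X - C c)) =
            u * ((Polynomial.X - C c) * ∏ c' ∈ s, (Polynomial.X - C c')) := by ring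
        rw [he, _root_.map_mul, Module.End.mul_apply, hx', map_zero]
      have hmono : (⨆ c' ∈ s, f.eigenspace c') ≤ ⨆ c' ∈ insert c s, f.eigenspace c' := by
        apply biSup_mono
        intro c' hc'
        exact Finset.mem_insert_of_mem hc'
      have hcmem : f.eigenspace c ≤ ⨆ c' ∈ insert c s, f.eigenspace c' :=
        le_biSup _ (Finset.mem_insert_self c s)
      rw [hsplit]
      exact Submodule.add_mem _ (hmono ht1mem) (hcmem ht2mem)


set_option maxHeartbeats 1000000 in
/-- If `A` and `B` are positive semidefinite complex matrices, then `A * B` is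
diagonalizable with nonnegative real eigenvalues: `A * B = P * D * P⁻¹` for some
invertible `P` and a diagonal matrix `D` with nonnegative real diagonal entries;
in particular every element of the spectrum of `A * B` is a nonnegative real number. -/
theorem mul_posSemidef_diagonalizable_nonneg_eigenvalues
    {n : ℕ} {A B : Matrix (Fin n) (Fin n) ℂ}
    (hA : A.PosSemidef) (hB : B.PosSemidef) :
    (∃ (P D : Matrix (Fin n) (Fin n) ℂ),
        IsUnit P.det ∧ D.IsDiag ∧ (∀ i, ∃ r : ℝ, 0 ≤ r ∧ D i i = (r : ℂ)) ∧
        A * B = P * D * P⁻¹) ∧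
    (∀ μ ∈ spectrum ℂ (A * B), ∃ r : ℝ, 0 ≤ r ∧ μ = (r : ℂ)) := by
  classical
  open scoped MatrixOrder in
  set S := CFC.sqrt A with hS
  open scoped MatrixOrder in
  set T := CFC.sqrt B with hT
  open scoped MatrixOrder in
  have hSps : S.PosSemidef := (CFC.sqrt_nonneg A).posSemidef
  open scoped MatrixOrder in
  have hTps : T.PosSemidef := (CFC.sqrt_nonneg B).posSemidef
  have hSh : Sᴴ = S := hSps.1
  have hTh : Tᴴ = T := hTps.1
  open scoped MatrixOrder in
  have hSS : S * S = A := CFC.sqrt_mul_sqrt_self A hA.nonneg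
  open scoped MatrixOrder in
  have hTT : T * T = B := CFC.sqrt_mul_sqrt_self B hB.nonneg
  have hW : (T * A * T).PosSemidef := by
    have h := hA.mul_mul_conjTranspose_same T
    rwa [hTh] at h
  set W := T * A * T with hWdef
  set Rc : Finset ℂ :=
    insert 0 ((Finset.image hW.1.eigenvalues Finset.univ).image (fun r : ℝ => (r : ℂ)))
    with hRc
  have hRcmem : ∀ c ∈ Rc, ∃ r : ℝ, 0 ≤ r ∧ c = (r : ℂ) := by
    intro c hc
    rcases Finset.mem_insert.mp hc with h | h
    · exact ⟨0, le_refl 0, by simp [h]⟩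
    · obtain ⟨r, hr, rfl⟩ := Finset.mem_image.mp h
      obtain ⟨j, _, rfl⟩ := Finset.mem_image.mp hr
      exact ⟨_, hW.eigenvalues_nonneg j, rfl⟩
  set p : ℂ[X] := ∏ c ∈ Rc, (Polynomial.X - C c) with hp
  set q : ℂ[X] := ∏ c ∈ Rc.erase 0, (Polynomial.X - C c) with hq
  have h0mem : (0:ℂ) ∈ Rc := Finset.mem_insert_self 0 _
  have hpW : aeval W p = 0 := by
    apply aux_aeval_eq_zero hW.1
    intro j
    rw [hp, eval_prod]
    apply Finset.prod_eq_zero (i := ((hW.1.eigenvalues j : ℝ) : ℂ))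
    · apply Finset.mem_insert_of_mem
      exact Finset.mem_image_of_mem _ (Finset.mem_image_of_mem _ (Finset.mem_univ j))
    · simp
  have hXq : p = Polynomial.X * q := by
    rw [hp, hq, ← Finset.mul_prod_erase _ _ h0mem]
    simp
  have hqX : p = q * Polynomial.X := by
    rw [hp, hq, ← Finset.prod_erase_mul _ _ h0mem]
    simp
  have hWq : W * aeval W q = 0 := by
    have h := hpW
    rw [hXq, _root_.map_mul, aeval_X] at h
    exact h
  have hSTq : (S * T) * aeval W q = 0 := by
    have hW' : W = (S * T)ᴴ * (S * T) := by
      rw [conjTranspose_mul, hSh, hTh, hWdef, ← hSS]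
      simp only [Matrix.mul_assoc]
    have h2 : ((S * T) * aeval W q)ᴴ * ((S * T) * aeval W q) = 0 := by
      calc ((S * T) * aeval W q)ᴴ * ((S * T) * aeval W q)
          = (aeval W q)ᴴ * (((S * T)ᴴ * (S * T)) * aeval W q) := by
            rw [conjTranspose_mul]; simp only [Matrix.mul_assoc]
        _ = (aeval W q)ᴴ * (W * aeval W q) := by rw [← hW']
        _ = 0 := by rw [hWq, Matrix.mul_zero]
    exact Matrix.conjTranspose_mul_self_eq_zero.mp h2
  have hpAB : aeval (A * B) p = 0 := by
    have hM : (A * B) = S * (S * B) := by rw [← hSS]; simp only [Matrix.mul_assoc]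
    have e1 : aeval (A * B) q * S = S * aeval ((S * B) * S) q := by
      rw [hM]; exact aux_aeval_swap S (S * B) q
    have e2 : aeval ((S * B) * S) q * (S * T) = (S * T) * aeval ((T * S) * (S * T)) q := by
      have h : (S * B) * S = (S * T) * (T * S) := by rw [← hTT]; simp only [Matrix.mul_assoc]
      rw [h]; exact aux_aeval_swap (S * T) (T * S) q
    have hWeq : (T * S) * (S * T) = W := by rw [hWdef, ← hSS]; simp only [Matrix.mul_assoc]
    rw [hqX, _root_.map_mul, aeval_X]
    calc aeval (A * B) q * (A * B) = aeval (A * B) q * S * (S * T * T) := by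
          rw [hM, ← hTT]; simp only [Matrix.mul_assoc]
      _ = S * aeval ((S * B) * S) q * (S * T * T) := by rw [e1]
      _ = S * (aeval ((S * B) * S) q * (S * T)) * T := by simp only [Matrix.mul_assoc]
      _ = S * ((S * T) * aeval W q) * T := by rw [e2, hWeq]
      _ = 0 := by rw [hSTq, Matrix.mul_zero, Matrix.zero_mul]
  set f : Module.End ℂ (Fin n → ℂ) := Matrix.toLinAlgEquiv' (A * B) with hf
  have hfp : aeval f p = 0 := by
    have h := Polynomial.aeval_algHom_apply Matrix.toLinAlgEquiv'.toAlgHom (A * B) p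
    rw [hpAB, map_zero] at h
    exact h
  have hsup : (⨆ c ∈ Rc, f.eigenspace c) = ⊤ := by
    rw [eq_top_iff]
    intro x _
    exact aux_mem_iSup_eigenspace f Rc x (by rw [hfp]; rfl)
  set E : {c // c ∈ Rc} → Submodule ℂ (Fin n → ℂ) := fun c => f.eigenspace c with hE
  have hindep : iSupIndep E := (f.eigenspaces_iSupIndep).comp Subtype.val_injective
  have hEsup : (⨆ c, E c) = ⊤ := by rw [iSup_subtype]; exact hsup
  have hinternal : DirectSum.IsInternal E :=
    (DirectSum.isInternal_submodule_iff_iSupIndep_and_iSup_eq_top E).mpr ⟨hindep, hEsup⟩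
  let bases : (c : {c // c ∈ Rc}) → Module.Basis (Module.Free.ChooseBasisIndex ℂ (E c)) ℂ (E c) :=
    fun c => Module.Free.chooseBasis ℂ (E c)
  let bb := hinternal.collectedBasis bases
  have hcard : Fintype.card ((c : {c // c ∈ Rc}) × Module.Free.ChooseBasisIndex ℂ (E c)) = n := by
    have h1 := Module.finrank_eq_card_basis bb
    rw [Module.finrank_fin_fun] at h1
    exact h1.symm
  let eqv := Fintype.equivFinOfCardEq hcard
  let b' : Module.Basis (Fin n) ℂ (Fin n → ℂ) := bb.reindex eqv
  let d : Fin n → ℂ := fun j => ((eqv.symm j).1 : ℂ)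
  have hb'mem : ∀ j, b' j ∈ f.eigenspace (d j) := by
    intro j
    have h := hinternal.collectedBasis_mem bases (eqv.symm j)
    have hb : b' j = bb (eqv.symm j) := bb.reindex_apply eqv j
    rw [hb]
    exact h
  have hABvec : ∀ j, (A * B) *ᵥ (b' j) = d j • b' j := by
    intro j
    have h := Module.End.mem_eigenspace_iff.mp (hb'mem j)
    rw [hf, Matrix.toLinAlgEquiv'_apply] at h
    exact h
  set P : Matrix (Fin n) (Fin n) ℂ := (Pi.basisFun ℂ (Fin n)).toMatrix ⇑b' with hP
  have hPinv : Invertible P := (Pi.basisFun ℂ (Fin n)).invertibleToMatrix b'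
  have hPdet : IsUnit P.det := P.isUnit_det_of_invertible
  have hPentry : ∀ i j, P i j = b' j i := by
    intro i j; rw [hP, Module.Basis.toMatrix_apply, Pi.basisFun_repr]
  have hABP : (A * B) * P = P * Matrix.diagonal d := by
    ext i j
    have hcol : (fun k => P k j) = b' j := funext fun k => hPentry k j
    calc ((A * B) * P) i j = ((A * B) *ᵥ fun k => P k j) i := rfl
      _ = (d j • b' j) i := by rw [hcol, hABvec j]
      _ = P i j * d j := by rw [Pi.smul_apply, smul_eq_mul, ← hPentry i j, mul_comm]
      _ = (P * Matrix.diagonal d) i j := by rw [Matrix.mul_diagonal]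
  have hfinal : A * B = P * Matrix.diagonal d * P⁻¹ := by
    have h1 : P * P⁻¹ = 1 := Matrix.mul_nonsing_inv P hPdet
    calc A * B = (A * B) * (P * P⁻¹) := by rw [h1, Matrix.mul_one]
      _ = ((A * B) * P) * P⁻¹ := by simp only [Matrix.mul_assoc]
      _ = P * Matrix.diagonal d * P⁻¹ := by rw [hABP]
  constructor
  · refine ⟨P, Matrix.diagonal d, hPdet, Matrix.isDiag_diagonal d, ?_, hfinal⟩
    intro i
    obtain ⟨r, hr, hcr⟩ := hRcmem _ (eqv.symm i).1.2
    exact ⟨r, hr, by simp [Matrix.diagonal_apply_eq, d, hcr]⟩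
  · intro μ hμ
    have hmem : p.eval μ ∈ spectrum ℂ (aeval (A * B) p) :=
      spectrum.subset_polynomial_aeval (A * B) p ⟨μ, hμ, rfl⟩
    rw [hpAB] at hmem
    have hzero : p.eval μ = 0 := by
      by_contra h
      have hu : IsUnit (algebraMap ℂ (Matrix (Fin n) (Fin n) ℂ) (p.eval μ) - 0) := by
        rw [sub_zero]
        exact (Ne.isUnit h).map (algebraMap ℂ (Matrix (Fin n) (Fin n) ℂ))
      exact (spectrum.mem_iff.mp hmem) hu
    rw [hp, eval_prod] at hzero
    obtain ⟨c, hcRc, hc0⟩ := Finset.prod_eq_zero_iff.mp hzero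
    obtain ⟨r, hr, rfl⟩ := hRcmem c hcRc
    refine ⟨r, hr, ?_⟩
    have h : μ - (r : ℂ) = 0 := by simpa using hc0
    exact sub_eq_zero.mp h
end

section
/- Let A and B be positive semidefinite n×n complex matrices. Then tr √(√A · B · √A) = tr √(√B · A · √B), where √M denotes the unique positive semidefinite square root of a positive semidefinite matrix M. (Both sides equal tr |√A √B|, so the two Uhlmann expressions for the root fidelity coincide.) -/
open scoped Classical

open Matrix ComplexOrder

/-- The positive semidefinite square root of a matrix: the unique PSD square root
when the matrix is PSD, and `0` otherwise. -/
noncomputable def msqrt {n : Type*} [Fintype n] [DecidableEq n]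
    (A : Matrix n n ℂ) : Matrix n n ℂ :=
  if h : A.PosSemidef then
    (h.1.eigenvectorUnitary : Matrix n n ℂ) *
      diagonal ((↑) ∘ (Real.sqrt ∘ h.1.eigenvalues)) *
      (star h.1.eigenvectorUnitary : Matrix n n ℂ)
  else 0

noncomputable def Matrix.PosSemidef.sqrt {n : Type*} [Fintype n] [DecidableEq n]
    {A : Matrix n n ℂ} (h : A.PosSemidef) : Matrix n n ℂ :=
  (h.1.eigenvectorUnitary : Matrix n n ℂ) *
      diagonal ((↑) ∘ (Real.sqrt ∘ h.1.eigenvalues)) *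
      (star h.1.eigenvectorUnitary : Matrix n n ℂ)

theorem Matrix.IsHermitian.star_mul_self_mul_eq_diagonal {n : Type*} [Fintype n] [DecidableEq n]
    {A : Matrix n n ℂ} (hA : A.IsHermitian) :
    (star (hA.eigenvectorUnitary : Matrix n n ℂ)) * A * (hA.eigenvectorUnitary : Matrix n n ℂ) =
      diagonal (RCLike.ofReal ∘ hA.eigenvalues) := by
  have := hA.conjStarAlgAut_star_eigenvectorUnitary
  rw [Unitary.conjStarAlgAut_apply] at this
  simpa using this

section sqrtAux

open scoped MatrixOrder

variable {n : Type*} [Fintype n] [DecidableEq n]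

theorem Matrix.PosSemidef.sqrt_eq_cfc {A : Matrix n n ℂ} (hA : A.PosSemidef) :
    hA.sqrt = CFC.sqrt A := by
  rw [CFC.sqrt_eq_real_sqrt A hA.nonneg, cfcₙ_eq_cfc (hf0 := by simp), hA.1.cfc_eq, IsHermitian.cfc,
    Unitary.conjStarAlgAut_apply]
  rfl

theorem Matrix.PosSemidef.posSemidef_sqrt {A : Matrix n n ℂ} (hA : A.PosSemidef) :
    hA.sqrt.PosSemidef := by
  rw [hA.sqrt_eq_cfc]
  exact (CFC.sqrt_nonneg A).posSemidef

theorem Matrix.PosSemidef.sqrt_mul_self {A : Matrix n n ℂ} (hA : A.PosSemidef) :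
    hA.sqrt * hA.sqrt = A := by
  rw [hA.sqrt_eq_cfc]
  exact CFC.sqrt_mul_sqrt_self A hA.nonneg

theorem Matrix.PosSemidef.eq_sqrt_of_sq_eq {A B : Matrix n n ℂ} (hA : A.PosSemidef)
    (hB : B.PosSemidef) (hAB : A ^ 2 = B) : A = hB.sqrt := by
  rw [hB.sqrt_eq_cfc]
  exact (CFC.sqrt_unique (by rw [← sq]; exact hAB) hA.nonneg).symm

end sqrtAux

section aux

variable {m : Type*} [Fintype m] [DecidableEq m]

/-- L1: trace of the PSD sqrt is the sum of square roots of eigenvalues. -/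
lemma trace_sqrt_eq_sum {M : Matrix m m ℂ} (hM : M.PosSemidef) :
    hM.sqrt.trace = ∑ i, (Real.sqrt (hM.1.eigenvalues i) : ℂ) := by
  rw [Matrix.PosSemidef.sqrt, Matrix.trace_mul_cycle,
    Unitary.coe_star_mul_self, one_mul, Matrix.trace_diagonal]
  rfl

/-- L2: trace of √(X Xᴴ) equals the sum of square roots of eigenvalues of Xᴴ X. -/
lemma trace_sqrt_self_mul_conjTranspose (X : Matrix m m ℂ) :
    (Matrix.posSemidef_self_mul_conjTranspose X).sqrt.trace =
      ∑ i, (Real.sqrt ((Matrix.posSemidef_conjTranspose_mul_self X).1.eigenvalues i) : ℂ) := by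
  set h := Matrix.posSemidef_conjTranspose_mul_self X with hh
  set lam : m → ℝ := h.1.eigenvalues with hlam
  have hlam0 : ∀ i, 0 ≤ lam i := h.eigenvalues_nonneg
  set U : Matrix m m ℂ := (h.1.eigenvectorUnitary : Matrix m m ℂ) with hU
  set W : Matrix m m ℂ := X * U with hW
  have hWW : Wᴴ * W = Matrix.diagonal (fun i => (lam i : ℂ)) := by
    have := h.1.star_mul_self_mul_eq_diagonal
    calc Wᴴ * W = star U * (Xᴴ * X) * U := by
          simp only [hW, Matrix.conjTranspose_mul]
          noncomm_ring
      _ = Matrix.diagonal (fun i => (lam i : ℂ)) := this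
  -- columns with zero eigenvalue vanish
  have hcol : ∀ k, lam k = 0 → ∀ i, W i k = 0 := by
    intro k hk i
    have hdiag : (Wᴴ * W) k k = (lam k : ℂ) := by rw [hWW]; simp
    rw [Matrix.mul_apply] at hdiag
    have hzero : ∑ j, Wᴴ k j * W j k = 0 := by
      rw [hdiag, hk, Complex.ofReal_zero]
    have hsum : ∑ j, ((Complex.normSq (W j k) : ℝ) : ℂ) = 0 := by
      rw [← hzero]
      refine Finset.sum_congr rfl fun j _ => ?_
      rw [Matrix.conjTranspose_apply, Complex.normSq_eq_conj_mul_self]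
      rfl
    have hsumR : ∑ j, Complex.normSq (W j k) = 0 := by
      exact_mod_cast hsum
    have := (Finset.sum_eq_zero_iff_of_nonneg
      (fun j _ => Complex.normSq_nonneg (W j k))).mp hsumR i (Finset.mem_univ i)
    exact Complex.normSq_eq_zero.mp this
  set g : m → ℝ := fun i => (Real.sqrt (lam i))⁻¹ with hg
  set S : Matrix m m ℂ := W * Matrix.diagonal (fun i => (g i : ℂ)) * Wᴴ with hS
  have hSpsd : S.PosSemidef := by
    refine Matrix.PosSemidef.mul_mul_conjTranspose_same ?_ W
    refine Matrix.posSemidef_diagonal_iff.mpr fun i => ?_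
    rw [Complex.zero_le_real]
    positivity
  have hSsq : S ^ 2 = X * Xᴴ := by
    have key : W * Matrix.diagonal (fun i => ((g i * lam i * g i : ℝ) : ℂ)) * Wᴴ = W * Wᴴ := by
      ext i j
      rw [Matrix.mul_apply, Matrix.mul_apply]
      refine Finset.sum_congr rfl fun k _ => ?_
      rw [Matrix.mul_diagonal]
      rcases eq_or_ne (lam k) 0 with h0 | h0
      · rw [hcol k h0 i]; ring
      · have hs : Real.sqrt (lam k) * Real.sqrt (lam k) = lam k :=
          Real.mul_self_sqrt (hlam0 k)
        have hsne : Real.sqrt (lam k) ≠ 0 := by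
          intro hc
          rw [← hs, hc, mul_zero] at h0
          exact h0 rfl
        have : g k * lam k * g k = 1 := by
          show (Real.sqrt (lam k))⁻¹ * lam k * (Real.sqrt (lam k))⁻¹ = 1
          calc (Real.sqrt (lam k))⁻¹ * lam k * (Real.sqrt (lam k))⁻¹
              = (Real.sqrt (lam k))⁻¹ * (Real.sqrt (lam k) * Real.sqrt (lam k)) *
                (Real.sqrt (lam k))⁻¹ := by rw [hs]
            _ = ((Real.sqrt (lam k))⁻¹ * Real.sqrt (lam k)) *
                (Real.sqrt (lam k) * (Real.sqrt (lam k))⁻¹) := by ring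
            _ = 1 := by rw [inv_mul_cancel₀ hsne, mul_inv_cancel₀ hsne, one_mul]
        rw [this]; push_cast; ring
    have hWWc : W * Wᴴ = X * Xᴴ := by
      have hU1 : (U : Matrix m m ℂ) * star (U : Matrix m m ℂ) = 1 :=
        Matrix.mem_unitaryGroup_iff.mp h.1.eigenvectorUnitary.2
      calc W * Wᴴ = X * (U * star U) * Xᴴ := by
            simp only [hW, Matrix.conjTranspose_mul]; noncomm_ring
        _ = X * Xᴴ := by rw [hU1, mul_one]
    calc S ^ 2 = W * (Matrix.diagonal (fun i => (g i : ℂ)) * (Wᴴ * W) *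
            Matrix.diagonal (fun i => (g i : ℂ))) * Wᴴ := by
          rw [pow_two]; noncomm_ring [hS]
      _ = W * Matrix.diagonal (fun i => ((g i * lam i * g i : ℝ) : ℂ)) * Wᴴ := by
          rw [hWW, Matrix.diagonal_mul_diagonal, Matrix.diagonal_mul_diagonal]
          push_cast
          noncomm_ring
      _ = X * Xᴴ := by rw [key, hWWc]
  have hSeq : S = (Matrix.posSemidef_self_mul_conjTranspose X).sqrt :=
    hSpsd.eq_sqrt_of_sq_eq (Matrix.posSemidef_self_mul_conjTranspose X) hSsq
  rw [← hSeq, hS, Matrix.trace_mul_cycle, hWW, Matrix.diagonal_mul_diagonal,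
    Matrix.trace_diagonal]
  refine Finset.sum_congr rfl fun i _ => ?_
  have hs : Real.sqrt (lam i) * Real.sqrt (lam i) = lam i := Real.mul_self_sqrt (hlam0 i)
  rcases eq_or_ne (lam i) 0 with h0 | h0
  · show (lam i : ℂ) * ((Real.sqrt (lam i))⁻¹ : ℝ) = _
    rw [h0]
    norm_num
  · have hsne : Real.sqrt (lam i) ≠ 0 := by
      intro hc
      rw [← hs, hc, mul_zero] at h0
      exact h0 rfl
    have : lam i * g i = Real.sqrt (lam i) := by
      show lam i * (Real.sqrt (lam i))⁻¹ = Real.sqrt (lam i)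
      calc lam i * (Real.sqrt (lam i))⁻¹
          = Real.sqrt (lam i) * Real.sqrt (lam i) * (Real.sqrt (lam i))⁻¹ := by rw [hs]
        _ = Real.sqrt (lam i) := by rw [mul_assoc, mul_inv_cancel₀ hsne, mul_one]
    rw [← this]
    push_cast
    ring

/-- The key equality: trace √(X Xᴴ) = trace √(Xᴴ X). -/
lemma trace_sqrt_mul_conjTranspose_comm (X : Matrix m m ℂ) :
    (Matrix.posSemidef_self_mul_conjTranspose X).sqrt.trace =
      (Matrix.posSemidef_conjTranspose_mul_self X).sqrt.trace := by
  rw [trace_sqrt_self_mul_conjTranspose X,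
    trace_sqrt_eq_sum (Matrix.posSemidef_conjTranspose_mul_self X)]

end aux

/-- For positive semidefinite `A`, `B` one has
`tr √(√A · B · √A) = tr √(√B · A · √B)`. -/
theorem trace_sqrt_conj_comm {n : ℕ} {A B : Matrix (Fin n) (Fin n) ℂ}
    (hA : A.PosSemidef) (hB : B.PosSemidef) :
    (msqrt (msqrt A * B * msqrt A)).trace = (msqrt (msqrt B * A * msqrt B)).trace := by
  have hmA : msqrt A = hA.sqrt := dif_pos hA
  have hmB : msqrt B = hB.sqrt := dif_pos hB
  set X : Matrix (Fin n) (Fin n) ℂ := hA.sqrt * hB.sqrt with hX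
  have hXc : Xᴴ = hB.sqrt * hA.sqrt := by
    rw [hX, Matrix.conjTranspose_mul, hA.posSemidef_sqrt.1, hB.posSemidef_sqrt.1]
  have h1 : X * Xᴴ = msqrt A * B * msqrt A := by
    rw [hmA, hXc, hX, mul_assoc, ← mul_assoc hB.sqrt, hB.sqrt_mul_self, ← mul_assoc]
  have h2 : Xᴴ * X = msqrt B * A * msqrt B := by
    rw [hmB, hXc, hX, mul_assoc, ← mul_assoc hA.sqrt, hA.sqrt_mul_self, ← mul_assoc]
  rw [← h1, ← h2]
  have p1 : (X * Xᴴ).PosSemidef := Matrix.posSemidef_self_mul_conjTranspose X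
  have p2 : (Xᴴ * X).PosSemidef := Matrix.posSemidef_conjTranspose_mul_self X
  rw [msqrt, dif_pos p1, msqrt, dif_pos p2]
  exact trace_sqrt_mul_conjTranspose_comm X
end

section
/- Let σ be a 2×2 complex density matrix whose determinant D satisfies 0 < D < 1/4. Then the von Neumann entropy of σ (with natural logarithm) is given by the integral representation S(σ) = ∫₀^∞ D(2t+1) / ((t+1)(t² + t + D)) dt. -/
open scoped Classical

open Matrix ComplexOrder MeasureTheory

open Filter in
private lemma tendsto_log_sub_aux (c : ℝ) (hc : 0 < c) :
    Tendsto (fun t : ℝ => Real.log (t + c) - Real.log (t + 1)) atTop (nhds 0) := by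
  have h0 : Tendsto (fun t : ℝ => (c - 1) / (t + 1)) atTop (nhds 0) := by
    apply Tendsto.div_atTop tendsto_const_nhds
    exact tendsto_atTop_add_const_right _ 1 tendsto_id
  have h1 : Tendsto (fun t : ℝ => (t + c) / (t + 1)) atTop (nhds 1) := by
    have h2 : Tendsto (fun t : ℝ => 1 + (c - 1) / (t + 1)) atTop (nhds 1) := by
      simpa using tendsto_const_nhds.add h0
    apply h2.congr'
    filter_upwards [eventually_gt_atTop (0 : ℝ)] with t ht
    have : t + 1 ≠ 0 := by positivity
    field_simp
    ring
  have h3 := (Real.continuousAt_log one_ne_zero).tendsto.comp h1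
  rw [Real.log_one] at h3
  apply h3.congr'
  filter_upwards [eventually_gt_atTop (0 : ℝ)] with t ht
  rw [Function.comp_apply, Real.log_div (by positivity) (by positivity)]

open Filter in
private lemma key_integral_aux {D lam mu : ℝ} (hl : 0 < lam) (hm : 0 < mu)
    (hsum : lam + mu = 1) (hprod : lam * mu = D) :
    ∫ t in Set.Ioi (0 : ℝ), D * (2 * t + 1) / ((t + 1) * (t ^ 2 + t + D))
      = -(lam * Real.log lam + mu * Real.log mu) := by
  subst hprod
  have hmu : mu = 1 - lam := by linarith
  subst hmu
  have hl1 : lam < 1 := by linarith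
  set g : ℝ → ℝ := fun t =>
    -Real.log (t + 1) + lam * Real.log (t + lam) + (1 - lam) * Real.log (t + (1 - lam)) with hg
  have hderiv : ∀ x ∈ Set.Ici (0 : ℝ), HasDerivAt g
      (lam * (1 - lam) * (2 * x + 1) / ((x + 1) * (x ^ 2 + x + lam * (1 - lam)))) x := by
    intro x hx
    have hx0 : (0 : ℝ) ≤ x := hx
    have h1 : (0:ℝ) < x + 1 := by linarith
    have h2 : (0:ℝ) < x + lam := by linarith
    have h3 : (0:ℝ) < x + (1 - lam) := by linarith
    have d1 : HasDerivAt (fun t : ℝ => Real.log (t + 1)) (1 / (x + 1)) x := by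
      simpa using ((hasDerivAt_id x).add_const 1).log h1.ne'
    have d2 : HasDerivAt (fun t : ℝ => Real.log (t + lam)) (1 / (x + lam)) x := by
      simpa using ((hasDerivAt_id x).add_const lam).log h2.ne'
    have d3 : HasDerivAt (fun t : ℝ => Real.log (t + (1 - lam))) (1 / (x + (1 - lam))) x := by
      simpa using ((hasDerivAt_id x).add_const (1 - lam)).log h3.ne'
    have := (d1.neg.add (d2.const_mul lam)).add (d3.const_mul (1 - lam))
    convert this using 1
    all_goals try rfl
    have hq : x ^ 2 + x + lam * (1 - lam) = (x + lam) * (x + (1 - lam)) := by ring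
    rw [hq]
    field_simp
    ring
  have gpos : ∀ x ∈ Set.Ioi (0 : ℝ),
      0 ≤ lam * (1 - lam) * (2 * x + 1) / ((x + 1) * (x ^ 2 + x + lam * (1 - lam))) := by
    intro x hx
    have hx0 : (0 : ℝ) < x := hx
    have : (0:ℝ) < lam * (1 - lam) := by nlinarith
    positivity
  have hlim : Tendsto g atTop (nhds 0) := by
    have := ((tendsto_log_sub_aux lam hl).const_mul lam).add
      ((tendsto_log_sub_aux (1 - lam) (by linarith)).const_mul (1 - lam))
    rw [mul_zero, mul_zero, add_zero] at this
    apply this.congr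
    intro t
    simp only [hg]
    ring
  have := integral_Ioi_of_hasDerivAt_of_nonneg' hderiv gpos hlim
  rw [this]
  simp only [hg]
  rw [zero_add, zero_add, zero_add, Real.log_one]
  ring

/-- Von Neumann entropy of a (Hermitian) matrix via its eigenvalues, with natural
logarithm and the convention `0 ln 0 = 0`. -/
noncomputable def vnEntropy {𝕜 : Type*} [RCLike 𝕜] {n : Type*} [Fintype n] [DecidableEq n]
    (σ : Matrix n n 𝕜) : ℝ :=
  if h : σ.IsHermitian then -∑ i, (h.eigenvalues i) * Real.log (h.eigenvalues i) else 0

/-- Integral representation of the entropy of a qubit density matrix in terms of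
its determinant `D`: `S(σ) = ∫₀^∞ D(2t+1)/((t+1)(t²+t+D)) dt` for `0 < D < 1/4`. -/
theorem qubit_entropy_integral_repr
    {σ : Matrix (Fin 2) (Fin 2) ℂ} (hσ : σ.PosSemidef) (hσt : σ.trace = 1)
    {D : ℝ} (hdet : σ.det = (D : ℂ)) (hD₀ : 0 < D) (hD₁ : D < 1 / 4) :
    vnEntropy σ =
      ∫ t in Set.Ioi (0 : ℝ), D * (2 * t + 1) / ((t + 1) * (t ^ 2 + t + D)) := by
  have h : σ.IsHermitian := hσ.isHermitian
  have htr : σ.trace = ∑ i, (h.eigenvalues i : ℂ) := by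
    exact h.trace_eq_sum_eigenvalues
  have hsum : h.eigenvalues 0 + h.eigenvalues 1 = 1 := by
    have : ((h.eigenvalues 0 + h.eigenvalues 1 : ℝ) : ℂ) = 1 := by
      push_cast
      rw [← Fin.sum_univ_two (f := fun i => (h.eigenvalues i : ℂ)), ← htr, hσt]
    exact_mod_cast this
  have hprod : h.eigenvalues 0 * h.eigenvalues 1 = D := by
    have h2 := h.det_eq_prod_eigenvalues
    rw [hdet, Fin.prod_univ_two] at h2
    have h3 : ((h.eigenvalues 0 : ℂ)) * (h.eigenvalues 1 : ℂ) = (D : ℂ) := h2.symm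
    exact_mod_cast h3
  have h0 : 0 < h.eigenvalues 0 := by
    rcases lt_or_eq_of_le (hσ.eigenvalues_nonneg 0) with h' | h'
    · exact h'
    · exfalso; nlinarith [hprod, h'.symm]
  have h1 : 0 < h.eigenvalues 1 := by nlinarith
  rw [key_integral_aux h0 h1 hsum hprod, vnEntropy, dif_pos h, Fin.sum_univ_two]
end

section
/- Define f : ℝ≥0 → ℝ by f(D) := ∫₀^∞ D(2t+1) / ((t+1)(t² + t + D)) dt. Then for all real numbers a, b with 0 ≤ a ≤ 1 and 0 ≤ b ≤ 1 and all x, y ≥ 0, one has f(a²x + b²y) ≤ a f(x) + b f(y). -/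
open MeasureTheory
open Set

/-- `f(D) = ∫₀^∞ D(2t+1)/((t+1)(t²+t+D)) dt`. -/
noncomputable def fInt (D : ℝ) : ℝ :=
  ∫ t in Set.Ioi (0 : ℝ), D * (2 * t + 1) / ((t + 1) * (t ^ 2 + t + D))

lemma fInt_zero : fInt 0 = 0 := by
  simp [fInt]

lemma integrableOn_g {D : ℝ} (hD : 0 ≤ D) :
    IntegrableOn (fun t => D * (2 * t + 1) / ((t + 1) * (t ^ 2 + t + D))) (Set.Ioi 0) := by
  rcases eq_or_lt_of_le hD with h | h
  · simp [← h]
  · have hmeas : AEStronglyMeasurable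
        (fun t => D * (2 * t + 1) / ((t + 1) * (t ^ 2 + t + D)))
        (volume.restrict (Set.Ioi (0:ℝ))) := by
      refine (ContinuousOn.aestronglyMeasurable ?_ measurableSet_Ioi)
      refine ContinuousOn.div (by fun_prop) (by fun_prop) ?_
      intro t ht
      have ht' : 0 < t := ht
      have : 0 < (t + 1) * (t ^ 2 + t + D) := by positivity
      exact ne_of_gt this
    have hint : Integrable (fun t : ℝ => (2 * D + 2) * (1 + t ^ 2)⁻¹) :=
      integrable_inv_one_add_sq.const_mul _
    refine Integrable.mono hint.integrableOn hmeas ?_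
    filter_upwards [ae_restrict_mem measurableSet_Ioi] with t ht
    have ht' : (0:ℝ) < t := ht
    have h1 : 0 < (t + 1) * (t ^ 2 + t + D) := by positivity
    have h2 : (0:ℝ) < 1 + t ^ 2 := by positivity
    rw [Real.norm_eq_abs, Real.norm_eq_abs, abs_of_nonneg (by positivity),
      abs_of_nonneg (by positivity)]
    have h3 : (2*D+2)*(1+t^2)⁻¹ = (2*D+2)/(1+t^2) := (div_eq_mul_inv _ _).symm
    rw [div_le_iff₀ h1, h3, div_mul_eq_mul_div, le_div_iff₀ h2]
    nlinarith [sq_nonneg t, sq_nonneg (t*t), mul_pos ht' h, sq_nonneg (t - 1),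
      mul_nonneg (mul_nonneg ht'.le ht'.le) ht'.le, mul_nonneg ht'.le h.le,
      mul_nonneg (mul_nonneg ht'.le ht'.le) h.le]

lemma fInt_subadd {u v : ℝ} (hu : 0 ≤ u) (hv : 0 ≤ v) :
    fInt (u + v) ≤ fInt u + fInt v := by
  rw [fInt, fInt, fInt,
    ← integral_add (integrableOn_g hu) (integrableOn_g hv)]
  refine setIntegral_mono_on (integrableOn_g (by linarith))
    ((integrableOn_g hu).add (integrableOn_g hv)) measurableSet_Ioi ?_
  intro t ht
  have ht' : (0:ℝ) < t := ht
  have hs : (0:ℝ) < t ^ 2 + t := by positivity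
  have key : (u + v) / (t ^ 2 + t + (u + v)) ≤ u / (t ^ 2 + t + u) + v / (t ^ 2 + t + v) := by
    have e : (u + v) / (t ^ 2 + t + (u + v))
        = u / (t ^ 2 + t + (u + v)) + v / (t ^ 2 + t + (u + v)) := by
      rw [← add_div]
    rw [e]
    gcongr <;> linarith
  have e2 : ∀ D : ℝ, 0 ≤ D → D * (2 * t + 1) / ((t + 1) * (t ^ 2 + t + D))
      = D / (t ^ 2 + t + D) * ((2 * t + 1) / (t + 1)) := by
    intro D hD
    rw [div_mul_div_comm, mul_comm (t ^ 2 + t + D)]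
  rw [e2 _ (by linarith), e2 _ hu, e2 _ hv, ← add_mul]
  exact mul_le_mul_of_nonneg_right key (by positivity)

noncomputable def phi (c u : ℝ) : ℝ := (Real.sqrt (1 + 4*c^2*(u^2+u)) - 1)/2
noncomputable def phi' (c u : ℝ) : ℝ := c^2*(2*u+1)/Real.sqrt (1 + 4*c^2*(u^2+u))

lemma sqrt_q_sq {c u : ℝ} (hu : 0 ≤ u) :
    Real.sqrt (1 + 4*c^2*(u^2+u)) ^ 2 = 1 + 4*c^2*(u^2+u) :=
  Real.sq_sqrt (by positivity)

lemma one_le_sqrt_q {c u : ℝ} (hu : 0 ≤ u) :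
    1 ≤ Real.sqrt (1 + 4*c^2*(u^2+u)) := by
  rw [Real.le_sqrt (by norm_num) (by positivity)]
  nlinarith

lemma phi_nonneg {c u : ℝ} (hu : 0 ≤ u) : 0 ≤ phi c u := by
  have := one_le_sqrt_q (c := c) hu
  unfold phi; linarith

lemma phi_pos {c u : ℝ} (hc : 0 < c) (hu : 0 < u) : 0 < phi c u := by
  have h1 : (1:ℝ) < Real.sqrt (1 + 4*c^2*(u^2+u)) := by
    rw [Real.lt_sqrt (by norm_num)]
    have h0 : 0 < u^2 + u := by nlinarith [sq_nonneg u]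
    nlinarith [mul_pos (pow_pos hc 2) h0]
  unfold phi; linarith

lemma phi_zero (c : ℝ) : phi c 0 = 0 := by
  unfold phi; norm_num

lemma phi_hasDerivAt {c u : ℝ} (hu : 0 ≤ u) :
    HasDerivAt (phi c) (phi' c u) u := by
  have h1 : HasDerivAt (fun u : ℝ => u^2 + u) (2*u + 1) u := by
    exact ((hasDerivAt_pow 2 u).add (hasDerivAt_id' u)).congr_deriv (by ring)
  have hq : HasDerivAt (fun u : ℝ => 1 + 4*c^2*(u^2+u)) (4*c^2*(2*u+1)) u :=
    (h1.const_mul (4*c^2)).const_add 1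
  have hqpos : (0:ℝ) < 1 + 4*c^2*(u^2+u) := by positivity
  have hsq : HasDerivAt (fun u : ℝ => Real.sqrt (1 + 4*c^2*(u^2+u)))
      (1 / (2 * Real.sqrt (1 + 4*c^2*(u^2+u))) * (4*c^2*(2*u+1))) u :=
    (Real.hasDerivAt_sqrt hqpos.ne').comp u hq
  have hspos : 0 < Real.sqrt (1 + 4*c^2*(u^2+u)) := Real.sqrt_pos.mpr hqpos
  have := (hsq.sub_const 1).div_const 2
  refine this.congr_deriv ?_
  unfold phi'
  field_simp
  ring

lemma phi_tendsto {c : ℝ} (hc : 0 < c) : Filter.Tendsto (phi c) Filter.atTop Filter.atTop := by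
  apply Filter.tendsto_atTop_mono' Filter.atTop
    (show ∀ᶠ u in Filter.atTop, c*u - 1/2 ≤ phi c u by
      filter_upwards [Filter.eventually_ge_atTop (0:ℝ)] with u hu
      have : 2*c*u ≤ Real.sqrt (1 + 4*c^2*(u^2+u)) := by
        apply Real.le_sqrt_of_sq_le
        nlinarith [mul_nonneg hc.le hu]
      unfold phi; linarith)
  exact Filter.tendsto_atTop_add_const_right _ _ (Filter.Tendsto.const_mul_atTop hc Filter.tendsto_id)

lemma alg_subst {c x u : ℝ} (hc : 0 < c) (hx : 0 < x) (hu : 0 ≤ u) :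
    (c^2*x) * (2 * phi c u + 1) / ((phi c u + 1) * ((phi c u) ^ 2 + phi c u + c^2*x))
      * phi' c u
    = c^2*x*(2*u+1)/((phi c u + 1)*(u^2+u+x)) := by
  have hs2 := sqrt_q_sq (c := c) hu
  have hs1 := one_le_sqrt_q (c := c) hu
  set s := Real.sqrt (1 + 4*c^2*(u^2+u)) with hsdef
  unfold phi phi'
  rw [← hsdef]
  have h1 : ((s-1)/2)^2 + ((s-1)/2) + c^2*x = c^2*(u^2+u+x) := by
    linear_combination hs2 / 4
  rw [h1]
  have hs0 : 0 < s := by linarith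
  have h2 : 0 < (s-1)/2 + 1 := by linarith
  have h3 : 0 < u^2+u+x := by positivity
  have hd1 : 0 < ((s-1)/2 + 1) * (c^2*(u^2+u+x)) * s :=
    mul_pos (mul_pos h2 (by positivity)) hs0
  have hd2 : 0 < ((s-1)/2 + 1) * (u^2+u+x) := mul_pos h2 h3
  rw [div_mul_div_comm, div_eq_div_iff hd1.ne' hd2.ne']
  ring

lemma alg_bound {c x u : ℝ} (hc : 0 < c) (hc1 : c ≤ 1) (hx : 0 < x) (hu : 0 ≤ u) :
    c^2*x*(2*u+1)/((phi c u + 1)*(u^2+u+x))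
      ≤ c * (x * (2*u+1) / ((u+1)*(u^2+u+x))) := by
  have hs2 := sqrt_q_sq (c := c) hu
  have hs1 := one_le_sqrt_q (c := c) hu
  set s := Real.sqrt (1 + 4*c^2*(u^2+u)) with hsdef
  unfold phi
  rw [← hsdef]
  have hs0 : 0 < s := by linarith
  have key : c*(u+1) ≤ (s-1)/2 + 1 := by
    have h4 : (2*c*(u+1)-1)^2 ≤ s^2 := by
      rw [hs2]
      nlinarith [mul_nonneg (mul_nonneg hc.le (sub_nonneg.2 hc1)) (by linarith : (0:ℝ) ≤ u + 1)]
    have h5 : 2*c*(u+1)-1 ≤ s := by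
      nlinarith [sq_nonneg (2*c*(u+1)-1-s)]
    linarith
  have h2 : 0 < (s-1)/2 + 1 := by linarith
  have h3 : 0 < u^2+u+x := by positivity
  have h5 : 0 < u + 1 := by linarith
  rw [← mul_div_assoc, div_le_div_iff₀ (by positivity) (by positivity)]
  nlinarith [mul_le_mul_of_nonneg_left key
    (show (0:ℝ) ≤ c*x*(2*u+1)*(u^2+u+x) by positivity)]

lemma fInt_scale {c x : ℝ} (hc0 : 0 ≤ c) (hc1 : c ≤ 1) (hx : 0 ≤ x) :
    fInt (c ^ 2 * x) ≤ c * fInt x := by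
  rcases eq_or_lt_of_le hc0 with hc | hc
  · rw [← hc]; simp [fInt_zero]
  rcases eq_or_lt_of_le hx with hx0 | hx0
  · rw [← hx0]; simp [fInt_zero]
  have hD : (0:ℝ) < c ^ 2 * x := by positivity
  -- the integrand of `fInt (c^2*x)`
  set g : ℝ → ℝ := fun t => c ^ 2 * x * (2 * t + 1) / ((t + 1) * (t ^ 2 + t + c ^ 2 * x))
    with hg
  -- the pulled-back integrand
  set G : ℝ → ℝ := fun u => c^2*x*(2*u+1)/((phi c u + 1)*(u^2+u+x)) with hG
  have hcomp : ∀ u : ℝ, 0 ≤ u → (g ∘ phi c) u * phi' c u = G u := by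
    intro u hu
    have := alg_subst (u := u) hc hx0 hu
    simpa [hg, hG, Function.comp, mul_comm, mul_left_comm, mul_assoc] using this
  have hGle : ∀ u : ℝ, 0 ≤ u → G u ≤ c * (x * (2*u+1) / ((u+1)*(u^2+u+x))) := by
    intro u hu
    exact alg_bound hc hc1 hx0 hu
  have hGnonneg : ∀ u : ℝ, 0 ≤ u → 0 ≤ G u := by
    intro u hu
    have h1 : 0 ≤ phi c u + 1 := by have := phi_nonneg (c := c) hu; linarith
    have : 0 ≤ (phi c u + 1) * (u^2+u+x) := by positivity
    exact div_nonneg (by positivity) this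
  have hgxint : IntegrableOn (fun u : ℝ => x * (2*u+1) / ((u+1)*(u^2+u+x))) (Set.Ici 0) :=
    (integrableOn_Ici_iff_integrableOn_Ioi).mpr (integrableOn_g hx)
  have hGcont : ContinuousOn G (Set.Ici 0) := by
    refine ContinuousOn.div ?_ ?_ ?_
    · fun_prop
    · apply ContinuousOn.mul
      · apply ContinuousOn.add _ continuousOn_const
        unfold phi
        fun_prop
      · fun_prop
    · intro u hu
      have hu' : (0:ℝ) ≤ u := hu
      have h1 : 0 < phi c u + 1 := by have := phi_nonneg (c := c) hu'; linarith
      have h2 : 0 < u^2+u+x := by positivity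
      positivity
  have hGint : IntegrableOn G (Set.Ici 0) := by
    refine Integrable.mono ((hgxint.const_mul c)) (hGcont.aestronglyMeasurable measurableSet_Ici) ?_
    filter_upwards [ae_restrict_mem measurableSet_Ici] with u hu
    have hu' : (0:ℝ) ≤ u := hu
    have h2 : 0 < u^2+u+x := by positivity
    have h5 : 0 < u + 1 := by linarith
    rw [Real.norm_eq_abs, Real.norm_eq_abs, abs_of_nonneg (hGnonneg u hu'),
      abs_of_nonneg (by positivity)]
    exact hGle u hu'
  -- continuity of g on Ioi 0
  have hgcont : ContinuousOn g (Set.Ioi 0) := by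
    refine ContinuousOn.div (by fun_prop) (by fun_prop) ?_
    intro t ht
    have ht' : (0:ℝ) < t := ht
    positivity
  -- change of variables
  have himg1 : phi c '' Set.Ioi 0 ⊆ Set.Ioi 0 := by
    rintro - ⟨u, hu, rfl⟩
    exact phi_pos hc hu
  have himg2 : phi c '' Set.Ici 0 ⊆ Set.Ici 0 := by
    rintro - ⟨u, hu, rfl⟩
    exact phi_nonneg hu
  have hg1 : IntegrableOn g (phi c '' Set.Ici 0) :=
    ((integrableOn_Ici_iff_integrableOn_Ioi).mpr (integrableOn_g hD.le)).mono_set himg2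
  have hg2 : IntegrableOn (fun u => (g ∘ phi c) u * phi' c u) (Set.Ici 0) := by
    refine (hGint.congr_fun ?_ measurableSet_Ici)
    intro u hu
    exact (hcomp u hu).symm
  have hcv : (∫ u in Set.Ioi (0:ℝ), (g ∘ phi c) u * phi' c u)
      = ∫ t in Set.Ioi (phi c 0), g t :=
    integral_comp_mul_deriv_Ioi (by unfold phi; fun_prop) (phi_tendsto hc)
      (fun u hu => (phi_hasDerivAt (le_of_lt hu)).hasDerivWithinAt)
      (hgcont.mono himg1) hg1 hg2
  have hcv' : (∫ u in Set.Ioi (0:ℝ), (g ∘ phi c) u * phi' c u) = fInt (c ^ 2 * x) := by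
    rw [hcv, phi_zero]
    rfl
  have step1 : fInt (c ^ 2 * x) = ∫ u in Set.Ioi (0:ℝ), G u := by
    rw [← hcv']
    exact setIntegral_congr_fun (f := fun u => (g ∘ phi c) u * phi' c u) (g := G)
      measurableSet_Ioi (fun u hu => hcomp u (le_of_lt hu))
  have step2 : (∫ u in Set.Ioi (0:ℝ), G u)
      ≤ ∫ u in Set.Ioi (0:ℝ), c * (x * (2*u+1) / ((u+1)*(u^2+u+x))) := by
    refine setIntegral_mono_on (hGint.mono_set Set.Ioi_subset_Ici_self)
      (((integrableOn_g hx).const_mul c)) measurableSet_Ioi ?_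
    intro u hu
    exact hGle u (le_of_lt hu)
  have step3 : (∫ u in Set.Ioi (0:ℝ), c * (x * (2*u+1) / ((u+1)*(u^2+u+x)))) = c * fInt x := by
    rw [fInt, ← integral_const_mul]
  calc fInt (c ^ 2 * x) = ∫ u in Set.Ioi (0:ℝ), G u := step1
    _ ≤ _ := step2
    _ = c * fInt x := step3

/-- The function `f` satisfies `f(a²x + b²y) ≤ a f(x) + b f(y)` for
`0 ≤ a, b ≤ 1` and `x, y ≥ 0`. -/
theorem fInt_subadditive_bound {a b x y : ℝ}
    (ha₀ : 0 ≤ a) (ha₁ : a ≤ 1) (hb₀ : 0 ≤ b) (hb₁ : b ≤ 1)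
    (hx : 0 ≤ x) (hy : 0 ≤ y) :
    fInt (a ^ 2 * x + b ^ 2 * y) ≤ a * fInt x + b * fInt y := by
  calc fInt (a ^ 2 * x + b ^ 2 * y)
      ≤ fInt (a ^ 2 * x) + fInt (b ^ 2 * y) := fInt_subadd (by positivity) (by positivity)
    _ ≤ a * fInt x + b * fInt y :=
      add_le_add (fInt_scale ha₀ ha₁ hx) (fInt_scale hb₀ hb₁ hy)
end

section
/- Define f : ℝ≥0 → ℝ by f(D) := ∫₀^∞ D(2t+1) / ((t+1)(t² + t + D)) dt. Then for every x > 0 one has f(x) ≤ 2x f′(x), where f′ denotes the derivative of f. -/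
open MeasureTheory

open Set in
lemma integrableOn_Ioi_of_bound (f : ℝ → ℝ) (C : ℝ)
    (hf : ContinuousOn f (Set.Ici 0)) (hb : ∀ t : ℝ, 1 ≤ t → |f t| ≤ C / t ^ 2) :
    IntegrableOn f (Set.Ioi 0) := by
  have h1 : IntegrableOn f (Set.Ioc 0 1) :=
    (hf.mono Icc_subset_Ici_self).integrableOn_Icc.mono_set
      Ioc_subset_Icc_self
  have h2 : IntegrableOn f (Set.Ioi 1) := by
    have hg : IntegrableOn (fun t : ℝ => C * t ^ (-2 : ℝ)) (Set.Ioi 1) :=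
      (integrableOn_Ioi_rpow_of_lt (by norm_num) one_pos).const_mul C
    refine Integrable.mono hg ((hf.mono ?_).aestronglyMeasurable measurableSet_Ioi) ?_
    · intro t ht; exact le_of_lt (lt_trans one_pos (Set.mem_Ioi.mp ht))
    · filter_upwards [ae_restrict_mem measurableSet_Ioi] with t ht
      have ht1 : (1:ℝ) ≤ t := le_of_lt ht
      have ht0 : (0:ℝ) < t := lt_of_lt_of_le one_pos ht1
      rw [Real.norm_eq_abs, Real.norm_eq_abs]
      refine (hb t ht1).trans ?_
      rw [Real.rpow_neg ht0.le, Real.rpow_two, div_eq_mul_inv]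
      exact le_abs_self _
  refine (h1.union h2).mono_set fun t ht => ?_
  rcases le_or_gt t 1 with h | h
  · exact Or.inl ⟨ht, h⟩
  · exact Or.inr h

lemma contF {D : ℝ} (hD : 0 < D) :
    ContinuousOn (fun t : ℝ => D * (2 * t + 1) / ((t + 1) * (t ^ 2 + t + D))) (Set.Ici 0) := by
  apply ContinuousOn.div (Continuous.continuousOn (by continuity))
    (Continuous.continuousOn (by continuity))
  intro t ht
  have ht0 : (0:ℝ) ≤ t := ht
  have : 0 < (t + 1) * (t ^ 2 + t + D) := by nlinarith
  exact ne_of_gt this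

lemma intF {D : ℝ} (hD : 0 < D) :
    IntegrableOn (fun t : ℝ => D * (2 * t + 1) / ((t + 1) * (t ^ 2 + t + D))) (Set.Ioi 0) := by
  refine integrableOn_Ioi_of_bound _ (3 * D) (contF hD) fun t ht => ?_
  have ht0 : (0:ℝ) < t := lt_of_lt_of_le one_pos ht
  have hden : 0 < (t + 1) * (t ^ 2 + t + D) := by nlinarith
  rw [abs_of_nonneg (by positivity), div_le_div_iff₀ hden (by positivity)]
  nlinarith [mul_nonneg (mul_nonneg hD.le ht0.le) (mul_nonneg ht0.le ht0.le),
    mul_nonneg hD.le (mul_nonneg ht0.le ht0.le), mul_nonneg hD.le ht0.le,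
    mul_nonneg (mul_nonneg hD.le hD.le) ht0.le, mul_nonneg hD.le hD.le]

lemma contF' {c : ℝ} (hc : 0 < c) :
    ContinuousOn (fun t : ℝ => (2 * t + 1) * (t ^ 2 + t) / ((t + 1) * (t ^ 2 + t + c) ^ 2))
      (Set.Ici 0) := by
  apply ContinuousOn.div (Continuous.continuousOn (by continuity))
    (Continuous.continuousOn (by continuity))
  intro t ht
  have ht0 : (0:ℝ) ≤ t := ht
  have : 0 < (t + 1) * (t ^ 2 + t + c) ^ 2 := by nlinarith [sq_nonneg (t^2+t+c)]
  exact ne_of_gt this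

lemma intF' {c : ℝ} (hc : 0 < c) :
    IntegrableOn (fun t : ℝ => (2 * t + 1) * (t ^ 2 + t) / ((t + 1) * (t ^ 2 + t + c) ^ 2))
      (Set.Ioi 0) := by
  refine integrableOn_Ioi_of_bound _ 3 (contF' hc) fun t ht => ?_
  have ht0 : (0:ℝ) < t := lt_of_lt_of_le one_pos ht
  have hden : 0 < (t + 1) * (t ^ 2 + t + c) ^ 2 := by nlinarith [sq_nonneg (t^2+t+c)]
  rw [abs_of_nonneg (by positivity), div_le_div_iff₀ hden (by positivity)]
  have h1 : (t ^ 2 + t) ^ 2 ≤ (t ^ 2 + t + c) ^ 2 := by nlinarith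
  have h2 : 3 * ((t + 1) * (t ^ 2 + t) ^ 2) ≤ 3 * ((t + 1) * (t ^ 2 + t + c) ^ 2) := by
    have := mul_le_mul_of_nonneg_left h1 (by linarith : (0:ℝ) ≤ t + 1)
    linarith
  have h3 : (2 * t + 1) * (t ^ 2 + t) * t ^ 2 ≤ 3 * ((t + 1) * (t ^ 2 + t) ^ 2) := by
    nlinarith [mul_nonneg (mul_nonneg ht0.le ht0.le) (mul_nonneg ht0.le (mul_nonneg ht0.le ht0.le)),
      mul_nonneg (mul_nonneg ht0.le ht0.le) (mul_nonneg ht0.le ht0.le),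
      mul_nonneg ht0.le (mul_nonneg ht0.le ht0.le), mul_nonneg ht0.le ht0.le]
  linarith

lemma derivF {t D : ℝ} (ht : 0 < t) (hD : 0 < D) :
    HasDerivAt (fun D : ℝ => D * (2 * t + 1) / ((t + 1) * (t ^ 2 + t + D)))
      ((2 * t + 1) * (t ^ 2 + t) / ((t + 1) * (t ^ 2 + t + D) ^ 2)) D := by
  have hnum : HasDerivAt (fun D : ℝ => D * (2 * t + 1)) (2 * t + 1) D := by
    simpa using (hasDerivAt_id D).mul_const (2 * t + 1)
  have hden : HasDerivAt (fun D : ℝ => (t + 1) * (t ^ 2 + t + D)) (t + 1) D := by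
    simpa using ((hasDerivAt_id D).const_add (t ^ 2 + t)).const_mul (t + 1)
  have hden0 : (t + 1) * (t ^ 2 + t + D) ≠ 0 := by nlinarith
  have := hnum.div hden hden0
  refine this.congr_deriv ?_
  have h1 : t + 1 ≠ 0 := by nlinarith
  have h2 : t ^ 2 + t + D ≠ 0 := by nlinarith
  field_simp
  ring

lemma hasDerivAt_fInt {x : ℝ} (hx : 0 < x) :
    HasDerivAt fInt
      (∫ t in Set.Ioi (0:ℝ), (2 * t + 1) * (t ^ 2 + t) / ((t + 1) * (t ^ 2 + t + x) ^ 2)) x := by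
  have hmeas : ∀ D : ℝ, AEStronglyMeasurable
      (fun t : ℝ => D * (2 * t + 1) / ((t + 1) * (t ^ 2 + t + D)))
      (volume.restrict (Set.Ioi 0)) := by
    intro D
    apply Measurable.aestronglyMeasurable
    fun_prop
  have hmeas' : AEStronglyMeasurable
      (fun t : ℝ => (2 * t + 1) * (t ^ 2 + t) / ((t + 1) * (t ^ 2 + t + x) ^ 2))
      (volume.restrict (Set.Ioi 0)) := by
    apply Measurable.aestronglyMeasurable
    fun_prop
  have key := hasDerivAt_integral_of_dominated_loc_of_deriv_le (μ := volume.restrict (Set.Ioi 0))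
    (x₀ := x)
    (F := fun D t => D * (2 * t + 1) / ((t + 1) * (t ^ 2 + t + D)))
    (F' := fun D t => (2 * t + 1) * (t ^ 2 + t) / ((t + 1) * (t ^ 2 + t + D) ^ 2))
    (bound := fun t => (2 * t + 1) * (t ^ 2 + t) / ((t + 1) * (t ^ 2 + t + x / 2) ^ 2))
    (Metric.ball_mem_nhds x (half_pos hx)) (Filter.Eventually.of_forall hmeas) (intF hx) hmeas' ?_ (intF' (half_pos hx)) ?_
  · exact key.2
  · filter_upwards [ae_restrict_mem measurableSet_Ioi] with t ht D hD
    have ht0 : (0:ℝ) < t := ht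
    have hD2 : x / 2 < D := by
      rw [Metric.mem_ball, Real.dist_eq, abs_lt] at hD
      linarith [hD.1]
    have hd1 : 0 < (t + 1) * (t ^ 2 + t + x / 2) ^ 2 := by positivity
    have hd2 : 0 < (t + 1) * (t ^ 2 + t + D) ^ 2 := by nlinarith [sq_nonneg (t^2+t+D)]
    rw [Real.norm_eq_abs, abs_of_nonneg (by positivity)]
    apply div_le_div_of_nonneg_left (by positivity) hd1
    have : (t ^ 2 + t + x / 2) ^ 2 ≤ (t ^ 2 + t + D) ^ 2 := by nlinarith
    nlinarith [this]
  · filter_upwards [ae_restrict_mem measurableSet_Ioi] with t ht D hD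
    have ht0 : (0:ℝ) < t := ht
    have hD2 : x / 2 < D := by
      rw [Metric.mem_ball, Real.dist_eq, abs_lt] at hD
      linarith [hD.1]
    exact derivF ht0 (lt_trans (half_pos hx) hD2)

noncomputable def Gaux (x u : ℝ) : ℝ :=
  2 * x * (u - x) / ((1 + Real.sqrt (1 + 4 * u)) * (u + x) ^ 2)

lemma sqrt_key {t : ℝ} (ht : 0 ≤ t) : Real.sqrt (1 + 4 * (t ^ 2 + t)) = 2 * t + 1 := by
  rw [show 1 + 4 * (t ^ 2 + t) = (2 * t + 1) ^ 2 by ring]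
  exact Real.sqrt_sq (by linarith)

lemma phi_image : (fun t : ℝ => t ^ 2 + t) '' Set.Ioi 0 = Set.Ioi 0 := by
  ext u
  constructor
  · rintro ⟨t, ht, rfl⟩
    have ht0 : (0:ℝ) < t := ht
    have : 0 < t ^ 2 + t := by nlinarith
    exact this
  · intro hu
    have hu0 : (0:ℝ) < u := hu
    refine ⟨(Real.sqrt (1 + 4 * u) - 1) / 2, ?_, ?_⟩
    · have hs : Real.sqrt (1 + 4 * u) ^ 2 = 1 + 4 * u := Real.sq_sqrt (by linarith)
      have : (1:ℝ) < Real.sqrt (1 + 4 * u) := by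
        nlinarith [hs, Real.sqrt_nonneg (1 + 4 * u)]
      show (0:ℝ) < (Real.sqrt (1 + 4 * u) - 1) / 2
      linarith
    · have hs : Real.sqrt (1 + 4 * u) ^ 2 = 1 + 4 * u := Real.sq_sqrt (by linarith)
      nlinarith [hs]

lemma phi_inj : Set.InjOn (fun t : ℝ => t ^ 2 + t) (Set.Ioi 0) := by
  intro a ha b hb h
  simp only at h
  have ha0 : (0:ℝ) < a := ha
  have hb0 : (0:ℝ) < b := hb
  nlinarith [sq_nonneg (a - b), sq_nonneg (a + b)]

lemma phi_deriv : ∀ t ∈ Set.Ioi (0:ℝ),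
    HasDerivWithinAt (fun t : ℝ => t ^ 2 + t) (2 * t + 1) (Set.Ioi 0) t := by
  intro t _
  have : HasDerivAt (fun t : ℝ => t ^ 2 + t) (2 * t + 1) t := by
    have := (hasDerivAt_pow 2 t).add (hasDerivAt_id t)
    refine this.congr_deriv ?_
    push_cast
    ring
  exact this.hasDerivWithinAt

lemma pointwise_cov1 {x : ℝ} (hx : 0 < x) {t : ℝ} (ht : t ∈ Set.Ioi (0:ℝ)) :
    |2 * t + 1| • Gaux x (t ^ 2 + t)
      = 2 * x * ((2 * t + 1) * (t ^ 2 + t) / ((t + 1) * (t ^ 2 + t + x) ^ 2))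
          - x * (2 * t + 1) / ((t + 1) * (t ^ 2 + t + x)) := by
  have ht0 : (0:ℝ) < t := ht
  rw [smul_eq_mul, abs_of_nonneg (by linarith : (0:ℝ) ≤ 2 * t + 1)]
  unfold Gaux
  rw [sqrt_key ht0.le]
  have h1 : t + 1 ≠ 0 := by linarith
  have h2 : t ^ 2 + t + x ≠ 0 := by nlinarith
  have h3 : 1 + (2 * t + 1) ≠ 0 := by linarith
  field_simp
  ring

lemma cov1 {x : ℝ} (hx : 0 < x) :
    ∫ u in Set.Ioi (0:ℝ), Gaux x u
      = ∫ t in Set.Ioi (0:ℝ),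
          (2 * x * ((2 * t + 1) * (t ^ 2 + t) / ((t + 1) * (t ^ 2 + t + x) ^ 2))
            - x * (2 * t + 1) / ((t + 1) * (t ^ 2 + t + x))) := by
  have hcov := integral_image_eq_integral_abs_deriv_smul (F := ℝ) measurableSet_Ioi phi_deriv
    phi_inj (fun u => Gaux x u)
  rw [phi_image] at hcov
  rw [hcov]
  exact setIntegral_congr_fun measurableSet_Ioi fun t ht => pointwise_cov1 hx ht

lemma intG {x : ℝ} (hx : 0 < x) : IntegrableOn (Gaux x) (Set.Ioi 0) := by
  have hiff := integrableOn_image_iff_integrableOn_abs_deriv_smul (F := ℝ) measurableSet_Ioi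
    phi_deriv phi_inj (fun u => Gaux x u)
  rw [phi_image] at hiff
  rw [show (Gaux x) = (fun u => Gaux x u) from rfl, hiff]
  have hint : IntegrableOn
      (fun t : ℝ => 2 * x * ((2 * t + 1) * (t ^ 2 + t) / ((t + 1) * (t ^ 2 + t + x) ^ 2))
        - x * (2 * t + 1) / ((t + 1) * (t ^ 2 + t + x))) (Set.Ioi 0) :=
    ((intF' hx).const_mul (2 * x)).sub (intF hx)
  apply hint.congr_fun ?_ measurableSet_Ioi
  intro t ht
  exact (pointwise_cov1 hx ht).symm

lemma psi_image {x : ℝ} (hx : 0 < x) :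
    (fun v : ℝ => x ^ 2 / v) '' Set.Ioi x = Set.Ioo 0 x := by
  ext u
  constructor
  · rintro ⟨v, hv, rfl⟩
    have hvx : x < v := hv
    have hv0 : 0 < v := lt_trans hx hvx
    constructor
    · positivity
    · show x ^ 2 / v < x
      rw [div_lt_iff₀ hv0]
      nlinarith
  · rintro ⟨hu0, hux⟩
    refine ⟨x ^ 2 / u, ?_, ?_⟩
    · show x < x ^ 2 / u
      rw [lt_div_iff₀ hu0]
      nlinarith
    · show x ^ 2 / (x ^ 2 / u) = u
      rw [div_div_eq_mul_div, mul_comm, mul_div_assoc,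
        div_self (by positivity : (x:ℝ) ^ 2 ≠ 0), mul_one]

lemma psi_inj {x : ℝ} (hx : 0 < x) :
    Set.InjOn (fun v : ℝ => x ^ 2 / v) (Set.Ioi x) := by
  intro a ha b hb h
  have ha0 : 0 < a := lt_trans hx ha
  have hb0 : 0 < b := lt_trans hx hb
  simp only at h
  rw [div_eq_div_iff (ne_of_gt ha0) (ne_of_gt hb0)] at h
  exact (mul_left_cancel₀ (by positivity : (x:ℝ) ^ 2 ≠ 0) h).symm

lemma psi_deriv {x : ℝ} (hx : 0 < x) : ∀ v ∈ Set.Ioi x,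
    HasDerivWithinAt (fun v : ℝ => x ^ 2 / v) (-(x ^ 2 / v ^ 2)) (Set.Ioi x) v := by
  intro v hv
  have hv0 : v ≠ 0 := ne_of_gt (lt_trans hx hv)
  have : HasDerivAt (fun v : ℝ => x ^ 2 / v) (-(x ^ 2 / v ^ 2)) v := by
    have := (hasDerivAt_inv hv0).const_mul (x ^ 2)
    refine this.congr_deriv ?_
    field_simp
  exact this.hasDerivWithinAt

lemma cov2 {x : ℝ} (hx : 0 < x) : ∫ u in Set.Ioo (0:ℝ) x, Gaux x u
    = ∫ v in Set.Ioi x, (x ^ 2 / v ^ 2) * Gaux x (x ^ 2 / v) := by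
  have hcov := integral_image_eq_integral_abs_deriv_smul (F := ℝ) measurableSet_Ioi
    (psi_deriv hx) (psi_inj hx) (fun u => Gaux x u)
  rw [psi_image hx] at hcov
  rw [hcov]
  refine setIntegral_congr_fun measurableSet_Ioi fun v hv => ?_
  have hv0 : 0 < v := lt_trans hx hv
  rw [smul_eq_mul, abs_neg, abs_of_nonneg (by positivity : (0:ℝ) ≤ x ^ 2 / v ^ 2)]

lemma intG2 {x : ℝ} (hx : 0 < x) :
    IntegrableOn (fun v : ℝ => (x ^ 2 / v ^ 2) * Gaux x (x ^ 2 / v)) (Set.Ioi x) := by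
  have hiff := integrableOn_image_iff_integrableOn_abs_deriv_smul (F := ℝ) measurableSet_Ioi
    (psi_deriv hx) (psi_inj hx) (fun u => Gaux x u)
  rw [psi_image hx] at hiff
  have hG : IntegrableOn (fun u => Gaux x u) (Set.Ioo 0 x) :=
    (intG hx).mono_set (Set.Ioo_subset_Ioi_self)
  rw [hiff] at hG
  apply hG.congr_fun ?_ measurableSet_Ioi
  intro v hv
  have hv0 : 0 < v := lt_trans hx hv
  show |(-(x ^ 2 / v ^ 2))| • Gaux x (x ^ 2 / v) = x ^ 2 / v ^ 2 * Gaux x (x ^ 2 / v)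
  rw [smul_eq_mul, abs_neg, abs_of_nonneg (by positivity : (0:ℝ) ≤ x ^ 2 / v ^ 2)]

lemma pointwise_key {x v : ℝ} (hx : 0 < x) (hv : x < v) :
    0 ≤ Gaux x v + (x ^ 2 / v ^ 2) * Gaux x (x ^ 2 / v) := by
  have hv0 : 0 < v := lt_trans hx hv
  set s1 := Real.sqrt (1 + 4 * v) with hs1def
  set s2 := Real.sqrt (1 + 4 * (x ^ 2 / v)) with hs2def
  have hs1 : 0 ≤ s1 := Real.sqrt_nonneg _
  have hs2 : 0 ≤ s2 := Real.sqrt_nonneg _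
  have ha : 0 < 1 + s1 := by linarith
  have hb : 0 < 1 + s2 := by linarith
  have hkey : x * (1 + s1) ≤ v * (1 + s2) := by
    have h1 : x * s1 = Real.sqrt (x ^ 2 * (1 + 4 * v)) := by
      rw [Real.sqrt_mul (by positivity), Real.sqrt_sq hx.le, hs1def]
    have h2 : v * s2 = Real.sqrt (v ^ 2 * (1 + 4 * (x ^ 2 / v))) := by
      rw [Real.sqrt_mul (by positivity), Real.sqrt_sq hv0.le, hs2def]
    have h3 : x * s1 ≤ v * s2 := by
      rw [h1, h2]
      apply Real.sqrt_le_sqrt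
      have hv2 : v ^ 2 * (1 + 4 * (x ^ 2 / v)) = v ^ 2 + 4 * x ^ 2 * v := by
        field_simp
      rw [hv2]
      nlinarith
    nlinarith
  have hform : Gaux x v + (x ^ 2 / v ^ 2) * Gaux x (x ^ 2 / v)
      = 2 * x * (v - x) * (v * (1 + s2) - x * (1 + s1))
          / ((1 + s1) * (1 + s2) * v * (v + x) ^ 2) := by
    unfold Gaux
    rw [← hs1def, ← hs2def]
    have hvx : (0:ℝ) < v + x := by linarith
    have hd : x ^ 2 / v + x ≠ 0 := by positivity
    field_simp
    ring
  rw [hform]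
  apply div_nonneg
  · have n1 : (0:ℝ) ≤ 2 * x := by linarith
    have n2 : (0:ℝ) ≤ v - x := by linarith
    have n3 : (0:ℝ) ≤ v * (1 + s2) - x * (1 + s1) := by linarith
    exact mul_nonneg (mul_nonneg n1 n2) n3
  · positivity

/-- The function `f` satisfies `f(x) ≤ 2x f′(x)` for every `x > 0`. -/
theorem fInt_le_two_mul_deriv {x : ℝ} (hx : 0 < x) :
    fInt x ≤ 2 * x * deriv fInt x := by
  have hderiv := hasDerivAt_fInt hx
  rw [hderiv.deriv]
  -- G integral is nonnegative
  have hsplit : ∫ u in Set.Ioi (0:ℝ), Gaux x u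
      = (∫ u in Set.Ioc (0:ℝ) x, Gaux x u) + ∫ u in Set.Ioi x, Gaux x u := by
    rw [← setIntegral_union (Set.Ioc_disjoint_Ioi le_rfl) measurableSet_Ioi
      ((intG hx).mono_set Set.Ioc_subset_Ioi_self)
      ((intG hx).mono_set (Set.Ioi_subset_Ioi hx.le)),
      Set.Ioc_union_Ioi_eq_Ioi hx.le]
  have hGnonneg : 0 ≤ ∫ u in Set.Ioi (0:ℝ), Gaux x u := by
    rw [hsplit, integral_Ioc_eq_integral_Ioo, cov2 hx,
      ← integral_add (intG2 hx) ((intG hx).mono_set (Set.Ioi_subset_Ioi hx.le))]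
    apply setIntegral_nonneg measurableSet_Ioi
    intro v hv
    have := pointwise_key hx (Set.mem_Ioi.mp hv)
    linarith
  rw [cov1 hx] at hGnonneg
  have hI' : IntegrableOn
      (fun t : ℝ => (2 * t + 1) * (t ^ 2 + t) / ((t + 1) * (t ^ 2 + t + x) ^ 2)) (Set.Ioi 0) :=
    intF' hx
  have hIF : IntegrableOn
      (fun t : ℝ => x * (2 * t + 1) / ((t + 1) * (t ^ 2 + t + x))) (Set.Ioi 0) := intF hx
  rw [integral_sub (hI'.const_mul (2 * x)) hIF, integral_const_mul] at hGnonneg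
  have : fInt x = ∫ t in Set.Ioi (0:ℝ), x * (2 * t + 1) / ((t + 1) * (t ^ 2 + t + x)) := rfl
  rw [this]
  linarith
end
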